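/- arXiv:2102.12352 — 2 statements merged into one kernel-verified Lean document; each statement's English description precedes it below -/
import Mathlib

section
/- Let f₁,…,f_m, g : ℝⁿ → ℝ be Borel measurable and S ⊆ ℝⁿ. Then the set D(S) = {φ ∈ ℝᵐ : M(S,φ) ≠ ∅} of feasible constraint values equals the convex hull of f(S), where f(x) = (f₁(x),…,f_m(x)). -/
open MeasureTheory Set Filter Topology Module Submodule
open scoped BigOperators ENNReal

noncomputable section

/-- The support of a measure: points all of whose open neighborhoods have
positive measure. -/
def msupport {E : Type*} [TopologicalSpace E] [MeasurableSpace E]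
    (μ : Measure E) : Set E :=
  {x | ∀ U : Set E, IsOpen U → x ∈ U → μ U ≠ 0}

/-- `M(S,φ)`: Borel probability measures with support contained in `S`,
with `E[f i] = φ i` for all `i` and `E[g]` finite. -/
def MC (n m : ℕ) (f : (Fin n → ℝ) → Fin m → ℝ) (g : (Fin n → ℝ) → ℝ)
    (S : Set (Fin n → ℝ)) (φ : Fin m → ℝ) : Set (Measure (Fin n → ℝ)) :=
  {μ | IsProbabilityMeasure μ ∧ msupport μ ⊆ S ∧
    (∀ i, Integrable (fun x => f x i) μ) ∧ (∀ i, ∫ x, f x i ∂μ = φ i) ∧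
    Integrable g μ}

lemma msupport_compl_null {E : Type*} [TopologicalSpace E] [MeasurableSpace E]
    [SecondCountableTopology E] (μ : Measure E) : μ (msupport μ)ᶜ = 0 := by
  obtain ⟨B, hBc, -, hBb⟩ := TopologicalSpace.exists_countable_basis E
  have hNnull : μ (⋃₀ {U ∈ B | μ U = 0}) = 0 :=
    (measure_sUnion_null_iff (hBc.mono (sep_subset _ _))).2 fun U hU => hU.2
  refine measure_mono_null ?_ hNnull
  intro x hx
  simp only [mem_compl_iff, msupport, mem_setOf_eq, not_forall] at hx
  obtain ⟨U, hUo, hxU, hUn⟩ := hx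
  rw [not_ne_iff] at hUn
  obtain ⟨V, hVB, hxV, hVU⟩ := hBb.exists_subset_of_mem_open hxU hUo
  exact ⟨V, ⟨hVB, measure_mono_null hVU hUn⟩, hxV⟩

lemma integrable_dirac'' {α : Type*} [MeasurableSpace α] {f : α → ℝ}
    (hf : Measurable f) (a : α) : Integrable f (Measure.dirac a) := by
  refine ⟨hf.aestronglyMeasurable, ?_⟩
  rw [HasFiniteIntegral, lintegral_dirac' _ hf.enorm]
  exact enorm_lt_top

theorem sep_lemma' {m : ℕ} {T : Set (Fin m → ℝ)} {b : Fin m → ℝ} (hTne : T.Nonempty)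
    (hbcl : b ∈ closure (convexHull ℝ T)) (hb : b ∉ convexHull ℝ T) :
    ∃ L : (Fin m → ℝ) →L[ℝ] ℝ, (∀ y ∈ T, L (y - b) ≤ 0) ∧
      ∃ v ∈ Submodule.span ℝ ((· - b) '' T), L v ≠ 0 := by
  classical
  set C : Set (Fin m → ℝ) := convexHull ℝ T with hC
  set W : Submodule ℝ (Fin m → ℝ) := Submodule.span ℝ ((· - b) '' T) with hW
  have hTW : ∀ y ∈ T, y - b ∈ W := fun y hy => subset_span ⟨y, hy, rfl⟩
  -- C - b ⊆ W
  have hCW : ∀ c ∈ C, c - b ∈ W := by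
    intro c hc
    have hconv : Convex ℝ {c : Fin m → ℝ | c - b ∈ W} := by
      intro x hx y hy a c' ha hc' hac
      have : a • x + c' • y - b = a • (x - b) + c' • (y - b) := by
        match_scalars <;> linarith
      simpa only [Set.mem_setOf_eq, this] using W.add_mem (W.smul_mem _ hx) (W.smul_mem _ hy)
    exact convexHull_min (fun y hy => hTW y hy) hconv hc
  set Dw : Set W := {w : W | b + ↑w ∈ C} with hDw
  have hDconv : Convex ℝ Dw := by
    intro x hx y hy a c' ha hc' hac
    have : b + ↑(a • x + c' • y) = a • (b + ↑x) + c' • (b + ↑y) := by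
      push_cast
      match_scalars <;> linarith
    simpa only [hDw, Set.mem_setOf_eq, this] using
      (convex_convexHull ℝ T) hx hy ha hc' hac
  have hvalD : Subtype.val '' Dw = (· - b) '' C := by
    ext v; constructor
    · rintro ⟨w, hw, rfl⟩; exact ⟨b + ↑w, hw, by module⟩
    · rintro ⟨c, hc, rfl⟩; refine ⟨⟨c - b, hCW c hc⟩, ?_, rfl⟩
      simp only [hDw, Set.mem_setOf_eq]
      have hcb : b + (c - b) = c := by module
      rw [hcb]; exact hc
  have hemb : IsClosedEmbedding ((↑) : W → (Fin m → ℝ)) :=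
    (Submodule.closed_of_finiteDimensional W).isClosedEmbedding_subtypeVal
  have h0cl : (0 : W) ∈ closure Dw := by
    have h1 : (0 : Fin m → ℝ) ∈ closure ((· - b) '' C) := by
      have : Continuous fun c : Fin m → ℝ => c - b := by continuity
      have := image_closure_subset_closure_image (s := C) this
      have h0 : (0 : Fin m → ℝ) ∈ (fun c : Fin m → ℝ => c - b) '' closure C := ⟨b, hbcl, by simp⟩
      exact this h0
    rw [← hvalD, hemb.closure_image_eq] at h1
    obtain ⟨w, hw, hw0⟩ := h1
    rwa [show w = 0 from Subtype.ext hw0] at hw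
  obtain ⟨t₀, ht₀⟩ := hTne
  have hd₁ : (⟨t₀ - b, hTW t₀ ht₀⟩ : W) ∈ Dw := by
    simp only [hDw, Set.mem_setOf_eq]
    have h : b + (t₀ - b) = t₀ := by module
    rw [h]; exact subset_convexHull ℝ T ht₀
  set d₁ : W := ⟨t₀ - b, hTW t₀ ht₀⟩
  have h0aff : (0 : W) ∈ affineSpan ℝ Dw := by
    have hcl : IsClosed (affineSpan ℝ Dw : Set W) :=
      (affineSpan ℝ Dw).closed_of_finiteDimensional
    have := closure_mono (subset_affineSpan ℝ Dw)
    rw [hcl.closure_eq] at this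
    exact this h0cl
  have spanDw_top : Submodule.span ℝ Dw = ⊤ := by
    rw [eq_top_iff]
    intro w _
    have hsub : W ≤ Submodule.map W.subtype (Submodule.span ℝ Dw) := by
      refine le_trans (le_of_eq hW) (Submodule.span_le.mpr ?_)
      rintro _ ⟨y, hy, rfl⟩
      refine ⟨⟨y - b, hTW y hy⟩, Submodule.subset_span ?_, rfl⟩
      simp only [hDw, Set.mem_setOf_eq]
      have h : b + (y - b) = y := by module
      rw [h]; exact subset_convexHull ℝ T hy
    obtain ⟨u, hu, huw⟩ := hsub w.2
    rwa [show u = w from Subtype.ext huw] at hu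
  have vseq : vectorSpan ℝ Dw = ⊤ := by
    have hle : Submodule.span ℝ Dw ≤ vectorSpan ℝ Dw := by
      rw [Submodule.span_le]
      intro d hd
      have hd1v : d₁ -ᵥ (0 : W) ∈ vectorSpan ℝ Dw := by
        have := AffineSubspace.vsub_mem_direction (mem_affineSpan ℝ hd₁) h0aff
        rwa [direction_affineSpan] at this
      have hdd1 : d -ᵥ d₁ ∈ vectorSpan ℝ Dw := vsub_mem_vectorSpan ℝ hd hd₁
      have : d = (d -ᵥ d₁) + (d₁ -ᵥ (0 : W)) := by simp [vsub_eq_sub]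
      rw [this]
      exact (vectorSpan ℝ Dw).add_mem hdd1 hd1v
    exact eq_top_iff.mpr (spanDw_top ▸ hle)
  have affeq : affineSpan ℝ Dw = ⊤ := by
    refine AffineSubspace.ext_of_direction_eq ?_
      ⟨d₁, mem_affineSpan ℝ hd₁, AffineSubspace.mem_top ℝ _ _⟩
    rw [direction_affineSpan, vseq, AffineSubspace.direction_top]
  have hint : (interior Dw).Nonempty :=
    (hDconv.interior_nonempty_iff_affineSpan_eq_top).2 affeq
  obtain ⟨w₀, hw₀⟩ := hint
  have h0notD : (0 : W) ∉ Dw := by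
    simp only [hDw, Set.mem_setOf_eq]
    simpa using hb
  obtain ⟨ℓ, hℓ⟩ := geometric_hahn_banach_open_point hDconv.interior isOpen_interior
    (fun h => h0notD (interior_subset h))
  have hℓ0 : ∀ a ∈ interior Dw, ℓ a < 0 := by
    intro a ha; simpa using hℓ a ha
  have hDle : ∀ x ∈ Dw, ℓ x ≤ 0 := by
    intro x hx
    have key : ∀ t : ℝ, t ∈ Ioo (0:ℝ) 1 → ℓ (t • w₀ + (1 - t) • x) < 0 := by
      intro t ht
      exact hℓ0 _ (hDconv.combo_interior_self_mem_interior hw₀ hx ht.1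
        (by linarith [ht.2]) (by ring))
    have hcont : Continuous fun t : ℝ => ℓ (t • w₀ + (1 - t) • x) :=
      ℓ.continuous.comp ((continuous_id.smul continuous_const).add
        ((continuous_const.sub continuous_id).smul continuous_const))
    have htend : Tendsto (fun t : ℝ => ℓ (t • w₀ + (1 - t) • x)) (𝓝[>] 0)
        (𝓝 (ℓ x)) := by
      have h2 := (hcont.tendsto 0).mono_left (nhdsWithin_le_nhds (s := Ioi (0:ℝ)))
      simpa using h2
    refine le_of_tendsto htend ?_
    filter_upwards [Ioo_mem_nhdsGT (by norm_num : (0:ℝ) < 1)] with t ht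
    exact (key t ht).le
  obtain ⟨q, hq⟩ := Submodule.exists_isCompl W
  set π := Submodule.linearProjOfIsCompl W q hq
  set L : (Fin m → ℝ) →L[ℝ] ℝ := LinearMap.toContinuousLinearMap (ℓ.toLinearMap.comp π) with hL
  have hLval : ∀ w : W, L ↑w = ℓ w := by
    intro w
    simp only [hL, LinearMap.coe_toContinuousLinearMap', LinearMap.comp_apply,
      ContinuousLinearMap.coe_coe]
    exact congrArg ℓ (Submodule.linearProjOfIsCompl_apply_left hq w)
  refine ⟨L, ?_, ?_⟩
  · intro y hy
    have : (⟨y - b, hTW y hy⟩ : W) ∈ Dw := by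
      simp only [hDw, Set.mem_setOf_eq]
      have h : b + (y - b) = y := by module
      rw [h]; exact subset_convexHull ℝ T hy
    have := hDle _ this
    rwa [← hLval ⟨y - b, hTW y hy⟩] at this
  · refine ⟨↑w₀, w₀.2, ?_⟩
    rw [hLval w₀]
    exact (hℓ0 w₀ hw₀).ne


lemma bary_mem {m : ℕ} {α : Type} [MeasurableSpace α] (d : ℕ) :
    ∀ (μ : Measure α), IsProbabilityMeasure μ → ∀ (f : α → (Fin m → ℝ)) (T : Set (Fin m → ℝ)),
    Integrable f μ → (∀ᵐ x ∂μ, f x ∈ T) →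
    Module.finrank ℝ (Submodule.span ℝ ((· - ∫ x, f x ∂μ) '' T)) ≤ d →
    (∫ x, f x ∂μ) ∈ convexHull ℝ T := by
  induction d using Nat.strong_induction_on with
  | _ d IH =>
    intro μ hμ f T hfi hT hd
    haveI := hμ
    set b : Fin m → ℝ := ∫ x, f x ∂μ with hb
    by_cases hbC : b ∈ convexHull ℝ T
    · exact hbC
    obtain ⟨x₀, hx₀⟩ := hT.exists
    have hTne : T.Nonempty := ⟨f x₀, hx₀⟩
    have hbcl : b ∈ closure (convexHull ℝ T) :=
      (convex_convexHull ℝ T).closure.integral_mem isClosed_closure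
        (hT.mono fun x hx => subset_closure (subset_convexHull ℝ T hx)) hfi
    obtain ⟨L, hL1, v, hvW, hvne⟩ := sep_lemma' hTne hbcl hbC
    -- the function x ↦ L (f x) - L b is a.e. ≤ 0 with integral 0, hence a.e. 0
    have hinti : Integrable (fun x => L (f x) - L b) μ :=
      (L.integrable_comp hfi).sub (integrable_const _)
    have hint0 : ∫ x, (L (f x) - L b) ∂μ = 0 := by
      rw [integral_sub (L.integrable_comp hfi) (integrable_const _),
        L.integral_comp_comm hfi, integral_const]
      simp [hb]
    have hle : ∀ᵐ x ∂μ, L (f x) - L b ≤ 0 := by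
      filter_upwards [hT] with x hx
      have := hL1 (f x) hx
      rwa [map_sub] at this
    have hzero : ∀ᵐ x ∂μ, L (f x) - L b = 0 := by
      have hnn : 0 ≤ᵐ[μ] fun x => L b - L (f x) := by
        filter_upwards [hle] with x hx
        simp only [Pi.zero_apply]; linarith
      have hinti' : Integrable (fun x => L b - L (f x)) μ :=
        (integrable_const _).sub (L.integrable_comp hfi)
      have h0 : ∫ x, (L b - L (f x)) ∂μ = 0 := by
        have : (fun x => L b - L (f x)) = fun x => -(L (f x) - L b) := by
          funext x; ring
        rw [this, integral_neg, hint0, neg_zero]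
      have := (integral_eq_zero_iff_of_nonneg_ae hnn hinti').1 h0
      filter_upwards [this] with x hx
      simp only [Pi.zero_apply] at hx
      linarith
    set T' : Set (Fin m → ℝ) := {y | y ∈ T ∧ L (y - b) = 0} with hT'
    have hT'ae : ∀ᵐ x ∂μ, f x ∈ T' := by
      filter_upwards [hT, hzero] with x hx hz
      exact ⟨hx, by rw [map_sub]; linarith⟩
    set W := Submodule.span ℝ ((· - b) '' T) with hW
    set W' := Submodule.span ℝ ((· - b) '' T') with hW'
    have hW'le : W' ≤ W ⊓ LinearMap.ker (L : (Fin m → ℝ) →ₗ[ℝ] ℝ) := by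
      rw [hW', Submodule.span_le]
      rintro _ ⟨y, hy, rfl⟩
      exact ⟨Submodule.subset_span ⟨y, hy.1, rfl⟩, by simpa using hy.2⟩
    have hlt : W ⊓ LinearMap.ker (L : (Fin m → ℝ) →ₗ[ℝ] ℝ) < W := by
      refine lt_of_le_of_ne inf_le_left fun h => hvne ?_
      have : v ∈ W ⊓ LinearMap.ker (L : (Fin m → ℝ) →ₗ[ℝ] ℝ) := h.symm ▸ hvW
      simpa using this.2
    have hd' : Module.finrank ℝ W' < d := by
      calc Module.finrank ℝ W' ≤
          Module.finrank ℝ (W ⊓ LinearMap.ker (L : (Fin m → ℝ) →ₗ[ℝ] ℝ) : Submodule ℝ _) :=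
            Submodule.finrank_mono hW'le
        _ < Module.finrank ℝ W := Submodule.finrank_lt_finrank_of_lt hlt
        _ ≤ d := hd
    have := IH (Module.finrank ℝ W') hd' μ hμ f T' hfi hT'ae (le_of_eq rfl)
    exact convexHull_mono (fun y hy => hy.1) this


/-- the set of feasible constraint values equals the convex hull
of `f(S)`. -/
theorem feasible_eq_convexHull {n m : ℕ}
    (f : (Fin n → ℝ) → Fin m → ℝ) (g : (Fin n → ℝ) → ℝ)
    (hf : ∀ i, Measurable fun x => f x i) (hg : Measurable g)
    (S : Set (Fin n → ℝ)) :
    {φ : Fin m → ℝ | (MC n m f g S φ).Nonempty} = convexHull ℝ (f '' S) := by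
  classical
  ext φ
  simp only [mem_setOf_eq]
  constructor
  · rintro ⟨μ, hprob, hsupp, hint, hmom, -⟩
    haveI := hprob
    have haeS : ∀ᵐ x ∂μ, x ∈ S := by
      have h1 : μ (msupport μ)ᶜ = 0 := msupport_compl_null μ
      have h2 : μ Sᶜ = 0 := measure_mono_null (compl_subset_compl.2 hsupp) h1
      rw [ae_iff]
      simpa [Set.compl_def] using h2
    have hfi : Integrable f μ := by
      have h1 : Integrable
          (fun x => ∑ i : Fin m, (f x i) • (Pi.single i (1:ℝ) : Fin m → ℝ)) μ :=
        integrable_finset_sum _ (fun i _ => ((hint i).smul_const _))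
      refine h1.congr (Eventually.of_forall fun x => ?_)
      funext j
      simp [Finset.sum_apply, Pi.single_apply]
    have hb : (∫ x, f x ∂μ) = φ := by
      funext i
      have h3 := (ContinuousLinearMap.proj (R := ℝ) (φ := fun _ : Fin m => ℝ)
        i).integral_comp_comm hfi
      simp only [ContinuousLinearMap.proj_apply] at h3
      rw [← h3, hmom i]
    rw [← hb]
    exact bary_mem _ μ hprob f (f '' S) hfi
      (haeS.mono fun x hx => ⟨x, hx, rfl⟩) le_rfl
  · intro hφ
    rw [convexHull_eq] at hφ
    obtain ⟨ι, t, w, z, hw0, hw1, hz, hcm⟩ := hφ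
    have hz' : ∀ i, i ∈ t → ∃ x, x ∈ S ∧ f x = z i := by
      intro i hi
      obtain ⟨x, hxS, hfx⟩ := hz i hi
      exact ⟨x, hxS, hfx⟩
    choose! p hpS hpf using hz'
    set μ : Measure (Fin n → ℝ) :=
      ∑ i ∈ t, (ENNReal.ofReal (w i)) • Measure.dirac (p i) with hμdef
    have hprob : IsProbabilityMeasure μ := by
      constructor
      rw [hμdef, Measure.finset_sum_apply]
      simp only [Measure.smul_apply, smul_eq_mul, measure_univ, mul_one]
      rw [← ENNReal.ofReal_sum_of_nonneg hw0, hw1, ENNReal.ofReal_one]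
    have hμstep : ∀ (h : (Fin n → ℝ) → ℝ), Measurable h →
        Integrable h μ ∧ ∫ x, h x ∂μ = ∑ i ∈ t, w i * h (p i) := by
      intro h hh
      have hinth : ∀ i ∈ t, Integrable h (ENNReal.ofReal (w i) • Measure.dirac (p i)) :=
        fun i _ => (integrable_dirac'' hh (p i)).smul_measure ENNReal.ofReal_ne_top
      refine ⟨(integrable_finset_sum_measure).2 hinth, ?_⟩
      rw [hμdef, integral_finset_sum_measure hinth]
      refine Finset.sum_congr rfl fun i hi => ?_
      rw [integral_smul_measure, integral_dirac' _ _ hh.stronglyMeasurable,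
        ENNReal.toReal_ofReal (hw0 i hi), smul_eq_mul]
    refine ⟨μ, hprob, ?_, fun i => (hμstep _ (hf i)).1, fun i => ?_, (hμstep g hg).1⟩
    · intro x hx
      by_contra hxS
      have hUc : IsClosed (↑(t.image p) : Set (Fin n → ℝ)) :=
        (t.image p).finite_toSet.isClosed
      have hxU : x ∈ (↑(t.image p) : Set (Fin n → ℝ))ᶜ := by
        simp only [mem_compl_iff, Finset.coe_image, Set.mem_image, Finset.mem_coe]
        rintro ⟨i, hi, rfl⟩
        exact hxS (hpS i hi)
      refine hx _ hUc.isOpen_compl hxU ?_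
      rw [hμdef, Measure.finset_sum_apply]
      refine Finset.sum_eq_zero fun i hi => ?_
      simp only [Measure.smul_apply, smul_eq_mul]
      rw [Measure.dirac_apply' _ hUc.isOpen_compl.measurableSet]
      have : p i ∈ (↑(t.image p) : Set (Fin n → ℝ)) := by
        simp only [Finset.coe_image, Set.mem_image, Finset.mem_coe]
        exact ⟨i, hi, rfl⟩
      rw [Set.indicator_of_notMem (by simpa using this), mul_zero]
    · rw [(hμstep _ (hf i)).2]
      have hsum : ∑ j ∈ t, w j • z j = φ := by
        rw [← Finset.centerMass_eq_of_sum_1 _ z hw1]; exact hcm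
      calc ∑ j ∈ t, w j * f (p j) i = ∑ j ∈ t, w j * z j i :=
            Finset.sum_congr rfl fun j hj => by rw [hpf j hj]
        _ = (∑ j ∈ t, w j • z j) i := by
            simp [Finset.sum_apply]
        _ = φ i := by rw [hsum]
end
end

section
/- Let f₁,…,f_m, g : ℝⁿ → ℝ be Borel measurable, S ⊆ ℝⁿ, φ ∈ ℝᵐ, and let (S_i)_{i≥1} be a progressive cover of S. Define U_i = sup_{μ ∈ M(S_i,φ)} E_μ[g(X)] and L_i = inf_{μ ∈ M(S_i,φ)} E_μ[g(X)] (in the extended reals). Then sup_{μ ∈ M(S,φ)} E_μ[g(X)] = lim_{i→∞} U_i and inf_{μ ∈ M(S,φ)} E_μ[g(X)] = lim_{i→∞} L_i. The same holds replacing M(S_i,φ) by M_k(S_i,φ) and M(S,φ) by M_k(S,φ) for any fixed k. -/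
open MeasureTheory Set Filter Topology
open scoped BigOperators ENNReal

noncomputable section

/-- `M_k(S,φ)`: members of `M(S,φ)` whose support has at most `k` points. -/
def MCk (n m : ℕ) (f : (Fin n → ℝ) → Fin m → ℝ) (g : (Fin n → ℝ) → ℝ)
    (S : Set (Fin n → ℝ)) (φ : Fin m → ℝ) (k : ℕ) : Set (Measure (Fin n → ℝ)) :=
  {μ | μ ∈ MC n m f g S φ ∧ (msupport μ).encard ≤ (k : ℕ∞)}

/-- A progressive cover of `S`: a monotone sequence of subsets of `S`
covering `S`. -/
def ProgCover {E : Type*} (S : Set E) (T : ℕ → Set E) : Prop :=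
  (∀ i j, i ≤ j → T i ⊆ T j) ∧ (∀ i, T i ⊆ S) ∧ ∀ x ∈ S, ∃ i, x ∈ T i

section Support

variable {E : Type*} [TopologicalSpace E] [MeasurableSpace E]

lemma ae_mem_msupport [SecondCountableTopology E] (μ : Measure E) :
    ∀ᵐ x ∂μ, x ∈ msupport μ := by
  obtain ⟨B, hBc, -, hBbasis⟩ := TopologicalSpace.exists_countable_basis E
  rw [ae_iff]
  have hsub : {x | ¬ x ∈ msupport μ} ⊆ ⋃₀ {U ∈ B | μ U = 0} := by
    intro x hx
    simp only [msupport, mem_setOf_eq] at hx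
    push_neg at hx
    obtain ⟨U, hU, hxU, hμU⟩ := hx
    obtain ⟨V, hVB, hxV, hVU⟩ := hBbasis.exists_subset_of_mem_open hxU hU
    exact ⟨V, ⟨hVB, le_antisymm (hμU ▸ measure_mono hVU) zero_le⟩, hxV⟩
  refine measure_mono_null hsub ?_
  exact (measure_sUnion_null_iff (hBc.mono (sep_subset _ _))).2 fun U hU => hU.2

end Support

section Core

open Module Pointwise

lemma integral_mem_convexHull {α : Type*} [MeasurableSpace α] (μ : Measure α)
    [IsProbabilityMeasure μ] {V : Type*} [NormedAddCommGroup V] [InnerProductSpace ℝ V]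
    [FiniteDimensional ℝ V] (F : α → V) (hF : Integrable F μ)
    (X₀ : Set α) (hX₀ : ∀ᵐ x ∂μ, x ∈ X₀) :
    ∫ x, F x ∂μ ∈ convexHull ℝ (F '' X₀) := by
  have hae : (ae μ).NeBot := ae_neBot.2 (IsProbabilityMeasure.ne_zero μ)
  have key : ∀ (d : ℕ) (X : Set α), (∀ᵐ x ∂μ, x ∈ X) →
      finrank ℝ (vectorSpan ℝ (F '' X)) = d → ∫ x, F x ∂μ ∈ convexHull ℝ (F '' X) := by
    intro d
    induction d using Nat.strong_induction_on with
    | _ d IH =>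
    intro X hX hd
    set p := ∫ x, F x ∂μ with hp_def
    set C := convexHull ℝ (F '' X) with hC_def
    have hCconv : Convex ℝ C := convex_convexHull ℝ _
    have hFXC : F '' X ⊆ C := subset_convexHull ℝ _
    have hXne : X.Nonempty := hX.exists
    have haeC : ∀ᵐ x ∂μ, F x ∈ C := by
      filter_upwards [hX] with x hx; exact hFXC ⟨x, hx, rfl⟩
    have hpcl : p ∈ closure C := by
      refine Convex.integral_mem hCconv.closure isClosed_closure ?_ hF
      filter_upwards [haeC] with x hx; exact subset_closure hx
    by_cases hp : p ∈ C
    · exact hp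
    exfalso
    set A := affineSpan ℝ (F '' X) with hA_def
    set D := vectorSpan ℝ (F '' X) with hD_def
    have hCA : C ⊆ (A : Set V) := convexHull_subset_affineSpan _
    have hpA : p ∈ A := by
      have hsub : closure C ⊆ (A : Set V) := by
        rw [← A.closed_of_finiteDimensional.closure_eq]
        exact closure_mono hCA
      exact hsub hpcl
    set Ch := C + (Dᗮ : Set V) with hCh_def
    have hChconv : Convex ℝ Ch := hCconv.add (Dᗮ.convex)
    have hCCh : C ⊆ Ch := fun c hc => by
      simpa using Set.add_mem_add hc (Submodule.zero_mem Dᗮ)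
    have hpCh : p ∉ Ch := by
      rintro ⟨c, hc, w, hw, hcw⟩
      have hcw' : c + w = p := hcw
      rw [← hcw'] at hpA hp
      have hcA : c ∈ A := hCA hc
      have hwD : w ∈ D := by
        have h1 : (c + w) -ᵥ c ∈ A.direction := AffineSubspace.vsub_mem_direction hpA hcA
        simpa [hA_def, direction_affineSpan] using h1
      have hw0 : w = 0 := by
        have := (Submodule.orthogonal_disjoint D).le_bot ⟨hwD, hw⟩
        simpa using this
      rw [hw0, add_zero] at hp
      exact hp hc
    obtain ⟨q0, hq0⟩ := hXne
    have hq0C : F q0 ∈ C := hFXC ⟨q0, hq0, rfl⟩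
    have hspan : affineSpan ℝ Ch = ⊤ := by
      rw [eq_top_iff]
      intro v _
      have hdecomp : v - F q0 ∈ D ⊔ Dᗮ := by
        rw [Submodule.sup_orthogonal_of_hasOrthogonalProjection]; trivial
      obtain ⟨dd, hdd, w, hw, hdw⟩ := Submodule.mem_sup.1 hdecomp
      have hqw : F q0 + w ∈ Ch := Set.add_mem_add hq0C hw
      have hDdir : D ≤ (affineSpan ℝ Ch).direction := by
        rw [direction_affineSpan]
        exact vectorSpan_mono ℝ (hFXC.trans hCCh)
      have hmem : dd +ᵥ (F q0 + w) ∈ affineSpan ℝ Ch :=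
        AffineSubspace.vadd_mem_of_mem_direction (hDdir hdd) (subset_affineSpan ℝ _ hqw)
      have hveq : v = dd +ᵥ (F q0 + w) := by
        have h1 : v = F q0 + (dd + w) := by rw [hdw]; abel
        simp only [vadd_eq_add]; rw [h1]; abel
      rwa [hveq]
    have hint : (interior Ch).Nonempty := by
      rw [hChconv.interior_nonempty_iff_affineSpan_eq_top]; exact hspan
    have hpint : p ∉ interior Ch := fun h => hpCh (interior_subset h)
    obtain ⟨a, ha⟩ := geometric_hahn_banach_open_point (hChconv.interior) isOpen_interior hpint
    obtain ⟨z, hz⟩ := hint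
    have hle : ∀ y ∈ Ch, a y ≤ a p := by
      intro y hy
      have hseq : ∀ k : ℕ, a ((1 / ((k : ℝ) + 1)) • z + (1 - 1 / ((k : ℝ) + 1)) • y) < a p := by
        intro k
        have hpos : (0 : ℝ) < 1 / ((k : ℝ) + 1) := by positivity
        have hle1 : 1 / ((k : ℝ) + 1) ≤ 1 := by
          rw [div_le_one (by positivity)]; linarith [Nat.cast_nonneg (α := ℝ) k]
        refine ha _ (hChconv.combo_interior_self_subset_interior (a := 1 / ((k : ℝ) + 1))
          (b := 1 - 1 / ((k : ℝ) + 1)) hpos (by linarith) (by ring) ?_)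
        exact Set.add_mem_add (smul_mem_smul_set hz) (smul_mem_smul_set hy)
      have h0 : Tendsto (fun k : ℕ => 1 / ((k : ℝ) + 1)) atTop (𝓝 0) :=
        tendsto_one_div_add_atTop_nhds_zero_nat
      have hcont : Continuous fun c : ℝ => a (c • z + (1 - c) • y) := by fun_prop
      have htend := (hcont.tendsto 0).comp h0
      simp only [Function.comp_def, zero_smul, sub_zero, one_smul, zero_add] at htend
      exact le_of_tendsto htend (Eventually.of_forall fun k => (hseq k).le)
    have hintA : ∫ x, a (F x) ∂μ = a p := a.integral_comp_comm hF
    have haeeq : ∀ᵐ x ∂μ, a (F x) = a p := by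
      have hnn : 0 ≤ᵐ[μ] fun x => a p - a (F x) := by
        filter_upwards [haeC] with x hx
        have := hle _ (hCCh hx); simp; linarith
      have hi : Integrable (fun x => a p - a (F x)) μ :=
        (integrable_const _).sub (a.integrable_comp hF)
      have hz0 : ∫ x, (a p - a (F x)) ∂μ = 0 := by
        rw [integral_sub (integrable_const _) (a.integrable_comp hF), integral_const, hintA]
        simp
      have heq0 := (integral_eq_zero_iff_of_nonneg_ae hnn hi).1 hz0
      filter_upwards [heq0] with x hx
      have : a p - a (F x) = 0 := hx
      linarith
    set X' := {x ∈ X | a (F x) = a p} with hX'_def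
    have hX'ae : ∀ᵐ x ∂μ, x ∈ X' := by
      filter_upwards [hX, haeeq] with x h1 h2; exact ⟨h1, h2⟩
    have hX'X : X' ⊆ X := sep_subset _ _
    have hD'le : vectorSpan ℝ (F '' X') ≤ D := vectorSpan_mono ℝ (image_mono hX'X)
    have hD'ne : vectorSpan ℝ (F '' X') ≠ D := by
      intro heq
      have hHa : ∀ y ∈ affineSpan ℝ (F '' X'), a y = a p := by
        intro y hy
        refine affineSpan_induction (p := fun v => a v = a p) hy ?_ ?_
        · rintro v ⟨x, hx, rfl⟩; exact hx.2
        · intro c u vv w hu hv hw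
          simp only [vsub_eq_sub, vadd_eq_add, map_add, _root_.map_smul, map_sub, hu, hv, hw,
            smul_eq_mul]
          ring
      obtain ⟨x', hx'⟩ := hX'ae.exists
      have hA'A : affineSpan ℝ (F '' X') ≤ A := affineSpan_mono ℝ (image_mono hX'X)
      have hq' : F x' ∈ affineSpan ℝ (F '' X') := subset_affineSpan ℝ _ ⟨x', hx', rfl⟩
      have hAeq : ∀ y ∈ A, a y = a p := by
        intro y hy
        have hy' : y -ᵥ F x' ∈ A.direction := AffineSubspace.vsub_mem_direction hy (hA'A hq')
        rw [hA_def, direction_affineSpan, ← hD_def, ← heq] at hy'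
        have hmem : (y -ᵥ F x') +ᵥ F x' ∈ affineSpan ℝ (F '' X') :=
          AffineSubspace.vadd_mem_of_mem_direction (by rwa [direction_affineSpan]) hq'
        simpa using hHa _ (by simpa using hmem)
      obtain ⟨c, hc, w, hw, hzdec⟩ := interior_subset hz
      have hzdec' : c + w = z := hzdec
      have hac : a c = a p := hAeq c (hCA hc)
      have hawneg : a w < 0 := by
        have hz' : a z < a p := ha z hz
        have hzz : a z = a c + a w := by rw [← hzdec']; simp
        linarith
      have hmem : c + (-1 : ℝ) • w ∈ Ch := Set.add_mem_add hc (Dᗮ.smul_mem _ hw)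
      have hle2 := hle _ hmem
      simp only [map_add, _root_.map_smul, smul_eq_mul, hac] at hle2
      linarith
    have hlt : finrank ℝ (vectorSpan ℝ (F '' X')) < d := by
      rw [← hd]
      exact Submodule.finrank_lt_finrank_of_lt (lt_of_le_of_ne hD'le hD'ne)
    exact hp (convexHull_mono (image_mono hX'X) (IH _ hlt X' hX'ae rfl))
  exact key _ X₀ hX₀ rfl

end Core

section Discrete

variable {n : ℕ}

lemma discrete_measure_props {ι : Type} (t : Finset ι) (w : ι → ℝ) (x : ι → (Fin n → ℝ))
    (hw0 : ∀ i ∈ t, 0 ≤ w i) (hw1 : ∑ i ∈ t, w i = 1) :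
    ∃ ν : Measure (Fin n → ℝ), IsProbabilityMeasure ν ∧
      msupport ν ⊆ ↑(t.image x) ∧
      (∀ h0 : (Fin n → ℝ) → ℝ, Measurable h0 → Integrable h0 ν) ∧
      (∀ h0 : (Fin n → ℝ) → ℝ, Measurable h0 →
        ∫ y, h0 y ∂ν = ∑ i ∈ t, w i * h0 (x i)) := by
  classical
  set ν : Measure (Fin n → ℝ) := ∑ i ∈ t, ENNReal.ofReal (w i) • Measure.dirac (x i) with hν
  have hdint : ∀ (h0 : (Fin n → ℝ) → ℝ), Measurable h0 → ∀ i : ι,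
      Integrable h0 (ENNReal.ofReal (w i) • Measure.dirac (x i)) := by
    intro h0 hh0 i
    refine Integrable.smul_measure ?_ ENNReal.ofReal_ne_top
    refine ⟨hh0.aestronglyMeasurable, ?_⟩
    rw [HasFiniteIntegral, lintegral_dirac' _ hh0.enorm]
    exact enorm_lt_top
  refine ⟨ν, ?_, ?_, ?_, ?_⟩
  · constructor
    rw [hν, Measure.finset_sum_apply]
    simp only [Measure.smul_apply, Measure.dirac_apply_of_mem (mem_univ _), smul_eq_mul, mul_one]
    rw [← ENNReal.ofReal_sum_of_nonneg hw0, hw1, ENNReal.ofReal_one]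
  · intro y hy
    by_contra hyn
    refine hy ((↑(t.image x) : Set (Fin n → ℝ)))ᶜ
      (t.image x).finite_toSet.isClosed.isOpen_compl (by simpa using hyn) ?_
    rw [hν, Measure.finset_sum_apply]
    refine Finset.sum_eq_zero fun i hi => ?_
    rw [Measure.smul_apply, Measure.dirac_apply' _
      (t.image x).finite_toSet.isClosed.isOpen_compl.measurableSet]
    have : x i ∈ (↑(t.image x) : Set (Fin n → ℝ)) := by
      simp only [Finset.coe_image, mem_image, Finset.mem_coe]; exact ⟨i, hi, rfl⟩
    have hnot : x i ∉ ((↑(t.image x) : Set (Fin n → ℝ)))ᶜ := fun h => h this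
    rw [Set.indicator_of_notMem hnot]
    simp
  · intro h0 hh0
    exact integrable_finset_sum_measure.2 fun i _ => hdint h0 hh0 i
  · intro h0 hh0
    rw [hν, integral_finset_sum_measure fun i _ => hdint h0 hh0 i]
    refine Finset.sum_congr rfl fun i hi => ?_
    rw [integral_smul_measure, integral_dirac]
    simp [ENNReal.toReal_ofReal (hw0 i hi)]

/-- Richter's theorem specialized to our setting: every measure in `MC` admits a finitely
supported measure with the same moments and the same `g`-integral, supported inside the
support of the original measure. -/
lemma exists_discrete_rep {n m : ℕ} (f : (Fin n → ℝ) → Fin m → ℝ) (g : (Fin n → ℝ) → ℝ)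
    (hf : ∀ i, Measurable fun x => f x i) (hg : Measurable g)
    (S : Set (Fin n → ℝ)) (φ : Fin m → ℝ) (μ : Measure (Fin n → ℝ))
    (hμ : μ ∈ MC n m f g S φ) :
    ∃ ν : Measure (Fin n → ℝ), ν ∈ MC n m f g S φ ∧ (msupport ν).Finite ∧
      msupport ν ⊆ msupport μ ∧ ∫ x, g x ∂ν = ∫ x, g x ∂μ := by
  classical
  obtain ⟨hprob, hsupp, hfint, hfeq, hgint⟩ := hμ
  haveI := hprob
  set h : Fin (m + 1) → ((Fin n → ℝ) → ℝ) := Fin.snoc (fun j x => f x j) g with hh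
  have hmeas : ∀ j, Measurable (h j) := by
    intro j
    induction j using Fin.lastCases with
    | last => simpa [hh, Fin.snoc_last] using hg
    | cast j => simpa [hh, Fin.snoc_castSucc] using hf j
  have hint : ∀ j, Integrable (h j) μ := by
    intro j
    induction j using Fin.lastCases with
    | last => simpa [hh, Fin.snoc_last] using hgint
    | cast j => simpa [hh, Fin.snoc_castSucc] using hfint j
  set E : Fin (m + 1) → EuclideanSpace ℝ (Fin (m + 1)) :=
    fun j => EuclideanSpace.single j (1 : ℝ) with hE
  set F : (Fin n → ℝ) → EuclideanSpace ℝ (Fin (m + 1)) :=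
    fun x => ∑ j, h j x • E j with hF
  have hFint : Integrable F μ :=
    integrable_finset_sum _ (fun j _ => (hint j).smul_const _)
  have hFp : ∫ x, F x ∂μ = ∑ j, (∫ x, h j x ∂μ) • E j := by
    rw [hF, integral_finset_sum _ (fun j _ => (hint j).smul_const _)]
    exact Finset.sum_congr rfl fun j _ => integral_smul_const _ _
  have hkey : ∀ (j : Fin (m + 1)) (c : Fin (m + 1) → ℝ),
      (EuclideanSpace.proj (𝕜 := ℝ) j) (∑ j', c j' • E j') = c j := by
    intro j c
    rw [map_sum]
    simp only [_root_.map_smul, smul_eq_mul, hE]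
    have : ∀ j' : Fin (m + 1), (EuclideanSpace.proj (𝕜 := ℝ) j)
        (EuclideanSpace.single j' (1 : ℝ)) = if j = j' then 1 else 0 := by
      intro j'
      simp [EuclideanSpace.single_apply, eq_comm]
    simp only [this, mul_ite, mul_one, mul_zero]
    simp
  have hX := ae_mem_msupport μ
  have hmem := integral_mem_convexHull μ F hFint (msupport μ) hX
  rw [convexHull_eq] at hmem
  obtain ⟨ι, t, w, z, hw0, hw1, hz, hcm⟩ := hmem
  set x : ι → (Fin n → ℝ) :=
    fun i => if hzi : z i ∈ F '' msupport μ then hzi.choose else (fun _ => 0) with hx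
  have hxX : ∀ i ∈ t, x i ∈ msupport μ ∧ F (x i) = z i := by
    intro i hi
    have hzi := hz i hi
    rw [hx]
    simp only [dif_pos hzi]
    exact ⟨hzi.choose_spec.1, hzi.choose_spec.2⟩
  have hsum : ∑ i ∈ t, w i • F (x i) = ∫ x0, F x0 ∂μ := by
    rw [← hcm, Finset.centerMass_eq_of_sum_1 _ _ hw1]
    exact Finset.sum_congr rfl fun i hi => by rw [(hxX i hi).2]
  have hcoord : ∀ j : Fin (m + 1), ∑ i ∈ t, w i * h j (x i) = ∫ x0, h j x0 ∂μ := by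
    intro j
    have hcongr := congrArg (EuclideanSpace.proj (𝕜 := ℝ) j) hsum
    rw [map_sum, hFp] at hcongr
    have hR : (EuclideanSpace.proj (𝕜 := ℝ) j) (∑ j', (∫ x0, h j' x0 ∂μ) • E j') =
        ∫ x0, h j x0 ∂μ := hkey j _
    rw [hR] at hcongr
    rw [← hcongr]
    refine Finset.sum_congr rfl fun i hi => ?_
    rw [_root_.map_smul, smul_eq_mul]
    congr 1
    exact (hkey j (fun j' => h j' (x i))).symm
  obtain ⟨ν, hνprob, hνsupp, hνint, hνeq⟩ := discrete_measure_props t w x hw0 hw1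
  have hsub : (↑(t.image x) : Set (Fin n → ℝ)) ⊆ msupport μ := by
    intro y hy
    simp only [Finset.coe_image, mem_image, Finset.mem_coe] at hy
    obtain ⟨i, hi, rfl⟩ := hy
    exact (hxX i hi).1
  refine ⟨ν, ⟨hνprob, (hνsupp.trans hsub).trans hsupp, fun j => hνint _ (hf j), ?_, hνint _ hg⟩,
    (t.image x).finite_toSet.subset hνsupp, hνsupp.trans hsub, ?_⟩
  · intro j
    have h1 := hνeq _ (hf j)
    have h2 := hcoord j.castSucc
    have h3 : h j.castSucc = fun x => f x j := by
      rw [hh]; exact Fin.snoc_castSucc _ _ _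
    rw [h3] at h2
    rw [h1, h2, hfeq j]
  · have h1 := hνeq _ hg
    have h2 := hcoord (Fin.last m)
    have h3 : h (Fin.last m) = g := by rw [hh]; exact Fin.snoc_last _ _
    rw [h3] at h2
    rw [h1, h2]

end Discrete

section Final

variable {n m : ℕ} {f : (Fin n → ℝ) → Fin m → ℝ} {g : (Fin n → ℝ) → ℝ}
  {φ : Fin m → ℝ}

lemma MC_mono {S S' : Set (Fin n → ℝ)} (h : S ⊆ S') :
    MC n m f g S φ ⊆ MC n m f g S' φ :=
  fun _ hμ => ⟨hμ.1, hμ.2.1.trans h, hμ.2.2⟩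

lemma MCk_mono {S S' : Set (Fin n → ℝ)} (h : S ⊆ S') {k : ℕ} :
    MCk n m f g S φ k ⊆ MCk n m f g S' φ k :=
  fun _ hμ => ⟨MC_mono h hμ.1, hμ.2⟩

lemma exists_cover_index {E : Type*} {S : Set E} {T : ℕ → Set E} (hT : ProgCover S T)
    {P : Set E} (hP : P.Finite) (hPS : P ⊆ S) : ∃ N, P ⊆ T N := by
  classical
  choose! idx hidx using hT.2.2
  refine ⟨hP.toFinset.sup idx, fun y hy => ?_⟩
  exact hT.1 _ _ (Finset.le_sup (hP.mem_toFinset.2 hy)) (hidx y (hPS hy))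

lemma aux_tendsto_sup {α : Type*} (G : α → EReal) (M : ℕ → Set α) (Ms : Set α)
    (hmono : ∀ i j, i ≤ j → M i ⊆ M j) (hsub : ∀ i, M i ⊆ Ms)
    (happrox : ∀ μ ∈ Ms, ∃ N, ∃ ν ∈ M N, G ν = G μ) :
    Tendsto (fun i => ⨆ μ ∈ M i, G μ) atTop (𝓝 (⨆ μ ∈ Ms, G μ)) := by
  have hmono' : Monotone (fun i => ⨆ μ ∈ M i, G μ) :=
    fun i j hij => biSup_mono (fun μ hμ => hmono i j hij hμ)
  have heq : (⨆ i, ⨆ μ ∈ M i, G μ) = ⨆ μ ∈ Ms, G μ := by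
    apply le_antisymm
    · exact iSup_le fun i => biSup_mono fun μ hμ => hsub i hμ
    · refine iSup₂_le fun μ hμ => ?_
      obtain ⟨N, ν, hν, hint⟩ := happrox μ hμ
      calc G μ = G ν := hint.symm
        _ ≤ ⨆ μ' ∈ M N, G μ' := le_biSup _ hν
        _ ≤ ⨆ i, ⨆ μ' ∈ M i, G μ' := le_iSup (fun i => ⨆ μ' ∈ M i, G μ') N
  exact heq ▸ tendsto_atTop_iSup hmono'

lemma aux_tendsto_inf {α : Type*} (G : α → EReal) (M : ℕ → Set α) (Ms : Set α)
    (hmono : ∀ i j, i ≤ j → M i ⊆ M j) (hsub : ∀ i, M i ⊆ Ms)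
    (happrox : ∀ μ ∈ Ms, ∃ N, ∃ ν ∈ M N, G ν = G μ) :
    Tendsto (fun i => ⨅ μ ∈ M i, G μ) atTop (𝓝 (⨅ μ ∈ Ms, G μ)) := by
  have hmono' : Antitone (fun i => ⨅ μ ∈ M i, G μ) :=
    fun i j hij => biInf_mono (fun μ hμ => hmono i j hij hμ)
  have heq : (⨅ i, ⨅ μ ∈ M i, G μ) = ⨅ μ ∈ Ms, G μ := by
    apply le_antisymm
    · refine le_iInf₂ fun μ hμ => ?_
      obtain ⟨N, ν, hν, hint⟩ := happrox μ hμ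
      calc (⨅ i, ⨅ μ' ∈ M i, G μ') ≤ ⨅ μ' ∈ M N, G μ' :=
            iInf_le (fun i => ⨅ μ' ∈ M i, G μ') N
        _ ≤ G ν := biInf_le _ hν
        _ = G μ := hint
    · exact le_iInf fun i => biInf_mono fun μ hμ => hsub i hμ
  exact heq ▸ tendsto_atTop_iInf hmono'

end Final

/-- the extrema of `E[g]` over a set covered by a progressive
cover are the limits of the extrema over the elements of the cover. -/
theorem progressive_cover_limits {n m : ℕ}
    (f : (Fin n → ℝ) → Fin m → ℝ) (g : (Fin n → ℝ) → ℝ)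
    (hf : ∀ i, Measurable fun x => f x i) (hg : Measurable g)
    (S : Set (Fin n → ℝ)) (φ : Fin m → ℝ)
    (T : ℕ → Set (Fin n → ℝ)) (hT : ProgCover S T) :
    Tendsto (fun i => ⨆ μ ∈ MC n m f g (T i) φ, ((∫ x, g x ∂μ : ℝ) : EReal))
      atTop (𝓝 (⨆ μ ∈ MC n m f g S φ, ((∫ x, g x ∂μ : ℝ) : EReal))) ∧
    Tendsto (fun i => ⨅ μ ∈ MC n m f g (T i) φ, ((∫ x, g x ∂μ : ℝ) : EReal))
      atTop (𝓝 (⨅ μ ∈ MC n m f g S φ, ((∫ x, g x ∂μ : ℝ) : EReal))) ∧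
    (∀ k : ℕ,
      Tendsto (fun i => ⨆ μ ∈ MCk n m f g (T i) φ k, ((∫ x, g x ∂μ : ℝ) : EReal))
        atTop (𝓝 (⨆ μ ∈ MCk n m f g S φ k, ((∫ x, g x ∂μ : ℝ) : EReal))) ∧
      Tendsto (fun i => ⨅ μ ∈ MCk n m f g (T i) φ k, ((∫ x, g x ∂μ : ℝ) : EReal))
        atTop (𝓝 (⨅ μ ∈ MCk n m f g S φ k, ((∫ x, g x ∂μ : ℝ) : EReal)))) := by
  have hmcApprox : ∀ μ ∈ MC n m f g S φ,
      ∃ N, ∃ ν ∈ MC n m f g (T N) φ,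
        ((∫ x, g x ∂ν : ℝ) : EReal) = ((∫ x, g x ∂μ : ℝ) : EReal) := by
    intro μ hμ
    obtain ⟨ν, hν, hfin, hsub, hint⟩ := exists_discrete_rep f g hf hg S φ μ hμ
    obtain ⟨N, hN⟩ := exists_cover_index hT hfin (hsub.trans hμ.2.1)
    exact ⟨N, ν, ⟨hν.1, hN, hν.2.2⟩, by rw [hint]⟩
  have hmckApprox : ∀ k : ℕ, ∀ μ ∈ MCk n m f g S φ k, ∃ N, μ ∈ MCk n m f g (T N) φ k := by
    intro k μ hμ
    obtain ⟨N, hN⟩ := exists_cover_index hT (Set.finite_of_encard_le_coe hμ.2) hμ.1.2.1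
    exact ⟨N, ⟨⟨hμ.1.1, hN, hμ.1.2.2⟩, hμ.2⟩⟩
  refine ⟨?_, ?_, fun k => ⟨?_, ?_⟩⟩
  · exact aux_tendsto_sup _ _ _ (fun i j hij => MC_mono (hT.1 i j hij))
      (fun i => MC_mono (hT.2.1 i)) hmcApprox
  · exact aux_tendsto_inf _ _ _ (fun i j hij => MC_mono (hT.1 i j hij))
      (fun i => MC_mono (hT.2.1 i)) hmcApprox
  · refine aux_tendsto_sup _ _ _ (fun i j hij => MCk_mono (hT.1 i j hij))
      (fun i => MCk_mono (hT.2.1 i)) (fun μ hμ => ?_)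
    obtain ⟨N, hN⟩ := hmckApprox k μ hμ
    exact ⟨N, μ, hN, rfl⟩
  · refine aux_tendsto_inf _ _ _ (fun i j hij => MCk_mono (hT.1 i j hij))
      (fun i => MCk_mono (hT.2.1 i)) (fun μ hμ => ?_)
    obtain ⟨N, hN⟩ := hmckApprox k μ hμ
    exact ⟨N, μ, hN, rfl⟩
end
end
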